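/- Let f be a C^1 diffeomorphism of a compact Riemannian manifold M and let Γ ⊂ M be a rectifiable curve such that the lengths |f^n(Γ)| are uniformly bounded over all n ≥ 0. Then for every δ > 0, limsup_{n→∞} (1/n) log r_n(Γ, δ) = 0. -/

import Mathlib

open Set Filter Metric MeasureTheory Module
open scoped ENNReal NNReal Topology

noncomputable section
/-! ### Metric dynamics: spanning sets, span rates, `Φ_ε`, asymptotic `h`-expansivity -/

section MetricDynamics

variable {X : Type*} [MetricSpace X]

/-- `A` is an `(n,ε)`-spanning set for `Y`: every point of `Y` is `ε`-shadowed by a point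
of `A` during the first `n` iterates. -/
def IsSpanningSet (f : X → X) (Y : Set X) (n : ℕ) (ε : ℝ) (A : Set X) : Prop :=
  ∀ y ∈ Y, ∃ x ∈ A, ∀ i < n, dist (f^[i] x) (f^[i] y) < ε

/-- `r_n(Y,ε)`: the minimal cardinality of an `(n,ε)`-spanning set of `Y` (`⊤` if there is
no finite spanning set). -/
def spanNum (f : X → X) (Y : Set X) (n : ℕ) (ε : ℝ) : ℕ∞ :=
  sInf {c : ℕ∞ | ∃ A : Finset X, IsSpanningSet f Y n ε ↑A ∧ (A.card : ℕ∞) = c}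

/-- `limsup_{n→∞} (1/n) log r_n(Y,ε)`, as an extended real number. -/
def spanRate (f : X → X) (Y : Set X) (ε : ℝ) : EReal :=
  Filter.limsup (fun n : ℕ => ((Real.log ((spanNum f Y n ε).toNat) / n : ℝ) : EReal))
    Filter.atTop

/-- The set `Φ_ε(x) = ⋂_{n ≥ 1} B̄^n_ε(x)`: points whose entire forward orbit stays within
`ε` of the orbit of `x` (in the `d_n` metrics for all `n`). -/
def PhiSet (f : X → X) (ε : ℝ) (x : X) : Set X :=
  {y | ∀ i : ℕ, dist (f^[i] y) (f^[i] x) ≤ ε}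

/-- `h̃(f,Y) = lim_{ε→0} limsup_n (1/n) log r_n(Y,ε)`; since the inner quantity increases
as `ε` decreases, the limit equals the supremum over `ε > 0`. -/
def hTilde (f : X → X) (Y : Set X) : EReal :=
  ⨆ ε : {ε : ℝ // 0 < ε}, spanRate f Y ε

/-- `h*_f(ε) = sup_{x ∈ X} h̃(f, Φ_ε(x))`. -/
def hStar (f : X → X) (ε : ℝ) : EReal :=
  ⨆ x : X, hTilde f (PhiSet f ε x)

/-- `f` is asymptotically `h`-expansive if `h*_f(ε) → 0` as `ε → 0⁺`. -/
def AsympHExpansive (f : X → X) : Prop :=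
  Filter.Tendsto (fun ε : ℝ => hStar f ε) (nhdsWithin 0 (Set.Ioi 0)) (nhds 0)

/-- Topological entropy, via spanning sets. -/
def topEnt (f : X → X) : EReal :=
  ⨆ ε : {ε : ℝ // 0 < ε}, spanRate f Set.univ ε

end MetricDynamics
private lemma logNat_mono {a b : ℕ} (h : a ≤ b) : Real.log a ≤ Real.log b := by
  rcases Nat.eq_zero_or_pos a with h0 | h0
  · subst h0; simpa using Real.log_natCast_nonneg b
  · exact Real.log_le_log (by exact_mod_cast h0) (by exact_mod_cast h)

/-- Key combinatorial lemma: if the variations of all iterates of a curve are bounded by `D`,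
then there is an `(n,δ)`-spanning set of the curve of cardinality `≤ ⌊n·D/(δ/2)⌋ + 1`. -/
private theorem exists_spanning_finset {X : Type*} [MetricSpace X] (F : X → X) (γ : ℝ → X)
    (n : ℕ) (δ D : ℝ) (hδ : 0 < δ) (hD : 0 ≤ D)
    (hvar : ∀ i, eVariationOn (F^[i] ∘ γ) (Icc 0 1) ≤ ENNReal.ofReal D) :
    ∃ A : Finset X, IsSpanningSet F (γ '' Icc 0 1) n δ ↑A ∧
      A.card ≤ ⌊(n : ℝ) * D / (δ / 2)⌋₊ + 1 := by
  classical
  set w : ℝ := δ / 2 with hw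
  have hw0 : 0 < w := by positivity
  have hfin : ∀ i : ℕ, ∀ s t : ℝ, s ∈ Icc (0:ℝ) 1 → t ∈ Icc (0:ℝ) 1 →
      eVariationOn (F^[i] ∘ γ) (Icc s t) ≠ ⊤ := by
    intro i s t hs ht
    have : eVariationOn (F^[i] ∘ γ) (Icc s t) ≤ ENNReal.ofReal D :=
      le_trans (eVariationOn.mono _ (Icc_subset_Icc hs.1 ht.2)) (hvar i)
    exact ne_top_of_le_ne_top ENNReal.ofReal_ne_top this
  set v : ℝ → ℝ := fun t => ∑ i ∈ Finset.range n, (eVariationOn (F^[i] ∘ γ) (Icc 0 t)).toReal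
    with hv
  have hv0 : ∀ t, 0 ≤ v t := fun t => Finset.sum_nonneg fun i _ => ENNReal.toReal_nonneg
  have h01 : (0:ℝ) ∈ Icc (0:ℝ) 1 := ⟨le_rfl, zero_le_one⟩
  have hsplit : ∀ i : ℕ, ∀ s t : ℝ, s ∈ Icc (0:ℝ) 1 → t ∈ Icc (0:ℝ) 1 → s ≤ t →
      (eVariationOn (F^[i] ∘ γ) (Icc s t)).toReal
        = (eVariationOn (F^[i] ∘ γ) (Icc 0 t)).toReal
          - (eVariationOn (F^[i] ∘ γ) (Icc 0 s)).toReal := by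
    intro i s t hs ht hst
    have key := eVariationOn.Icc_add_Icc (F^[i] ∘ γ) (s := Icc (0:ℝ) 1) hs.1 hst
      ⟨hs.1, hs.2⟩
    have e1 : Icc (0:ℝ) 1 ∩ Icc 0 s = Icc 0 s :=
      inter_eq_self_of_subset_right (Icc_subset_Icc le_rfl hs.2)
    have e2 : Icc (0:ℝ) 1 ∩ Icc s t = Icc s t :=
      inter_eq_self_of_subset_right (Icc_subset_Icc hs.1 ht.2)
    have e3 : Icc (0:ℝ) 1 ∩ Icc 0 t = Icc 0 t :=
      inter_eq_self_of_subset_right (Icc_subset_Icc le_rfl ht.2)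
    rw [e1, e2, e3] at key
    rw [← key, ENNReal.toReal_add (hfin i 0 s h01 hs) (hfin i s t hs ht)]
    ring
  have hdist : ∀ s t : ℝ, s ∈ Icc (0:ℝ) 1 → t ∈ Icc (0:ℝ) 1 → s ≤ t → ∀ i < n,
      dist (F^[i] (γ s)) (F^[i] (γ t)) ≤ v t - v s := by
    intro s t hs ht hst i hi
    have hd : dist (F^[i] (γ s)) (F^[i] (γ t))
        ≤ (eVariationOn (F^[i] ∘ γ) (Icc s t)).toReal := by
      rw [dist_edist]
      refine ENNReal.toReal_mono (hfin i s t hs ht) ?_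
      exact eVariationOn.edist_le (F^[i] ∘ γ) (x := s) (y := t)
        ⟨le_rfl, hst⟩ ⟨hst, le_rfl⟩
    refine hd.trans ?_
    rw [hsplit i s t hs ht hst]
    have hmono : ∀ j ∈ Finset.range n, (eVariationOn (F^[j] ∘ γ) (Icc 0 s)).toReal
        ≤ (eVariationOn (F^[j] ∘ γ) (Icc 0 t)).toReal := by
      intro j _
      have := hsplit j s t hs ht hst
      nlinarith [ENNReal.toReal_nonneg (a := eVariationOn (F^[j] ∘ γ) (Icc s t))]
    have hsum : v t - v s = ∑ j ∈ Finset.range n,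
        ((eVariationOn (F^[j] ∘ γ) (Icc 0 t)).toReal
          - (eVariationOn (F^[j] ∘ γ) (Icc 0 s)).toReal) := by
      rw [hv]; rw [Finset.sum_sub_distrib]
    rw [hsum]
    refine Finset.single_le_sum (f := fun j => (eVariationOn (F^[j] ∘ γ) (Icc 0 t)).toReal
      - (eVariationOn (F^[j] ∘ γ) (Icc 0 s)).toReal) ?_ (Finset.mem_range.2 hi)
    intro j hj
    have := hmono j hj
    linarith
  have hv1 : ∀ t, t ∈ Icc (0:ℝ) 1 → v t ≤ n * D := by
    intro t ht
    calc v t ≤ ∑ _i ∈ Finset.range n, D := by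
          apply Finset.sum_le_sum
          intro i _
          refine ENNReal.toReal_le_of_le_ofReal hD ?_
          exact le_trans (eVariationOn.mono _ (Icc_subset_Icc le_rfl ht.2)) (hvar i)
      _ = n * D := by simp [mul_comm]
  set K : ℕ := ⌊(n : ℝ) * D / w⌋₊ with hK
  set T : ℕ → ℝ := fun k =>
    if h : ∃ t, t ∈ Icc (0:ℝ) 1 ∧ ⌊v t / w⌋₊ = k then h.choose else 0 with hT
  refine ⟨(Finset.range (K + 1)).image (fun k => γ (T k)), ?_, ?_⟩
  · rintro y ⟨t, ht, rfl⟩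
    set k : ℕ := ⌊v t / w⌋₊ with hk
    have hkK : k ≤ K := by
      apply Nat.floor_le_floor
      gcongr
      exact hv1 t ht
    have hex : ∃ t', t' ∈ Icc (0:ℝ) 1 ∧ ⌊v t' / w⌋₊ = k := ⟨t, ht, rfl⟩
    obtain ⟨hs1, hs2⟩ := hex.choose_spec
    set s := hex.choose with hsdef
    have hTk : T k = s := by rw [hT]; exact dif_pos hex
    refine ⟨γ (T k), ?_, ?_⟩
    · exact Finset.mem_image.2 ⟨k, Finset.mem_range.2 (Nat.lt_succ_of_le hkK), rfl⟩
    · have hbound : ∀ u : ℝ, u ∈ Icc (0:ℝ) 1 → ⌊v u / w⌋₊ = k →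
          (k : ℝ) * w ≤ v u ∧ v u < (k + 1) * w := by
        intro u hu hku
        have h1 : (k : ℝ) ≤ v u / w := by
          rw [← hku]; exact Nat.floor_le (by positivity)
        have h2 : v u / w < k + 1 := by
          rw [← hku]; exact Nat.lt_floor_add_one _
        constructor
        · calc (k:ℝ) * w ≤ (v u / w) * w := by gcongr
            _ = v u := by field_simp
        · calc v u = (v u / w) * w := by field_simp
            _ < (k + 1) * w := by gcongr
      have hbs := hbound s hs1 hs2
      have hbt := hbound t ht hk.symm
      intro i hi
      rw [hTk]
      rcases le_total s t with hst | hst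
      · have := hdist s t hs1 ht hst i hi
        calc dist (F^[i] (γ s)) (F^[i] (γ t)) ≤ v t - v s := this
          _ < w := by linarith [hbs.1, hbt.2]
          _ < δ := by rw [hw]; linarith
      · have := hdist t s ht hs1 hst i hi
        rw [dist_comm]
        calc dist (F^[i] (γ t)) (F^[i] (γ s)) ≤ v s - v t := this
          _ < w := by linarith [hbt.1, hbs.2]
          _ < δ := by rw [hw]; linarith
  · exact le_trans Finset.card_image_le (le_of_eq (Finset.card_range _))

/-- If `Γ` is a rectifiable curve whose iterates `f^n(Γ)` have uniformly bounded length,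
then the `(n,δ)`-spanning numbers of `Γ` grow subexponentially, for every `δ > 0`. -/
theorem spanRate_eq_zero_of_bounded_curve_lengths
    {E : Type*} [NormedAddCommGroup E] [InnerProductSpace ℝ E] [FiniteDimensional ℝ E]
    {M : Type*} [MetricSpace M] [CompactSpace M] [ChartedSpace E M]
    [IsManifold (modelWithCornersSelf ℝ E) (⊤ : ℕ∞) M]
    (f : Diffeomorph (modelWithCornersSelf ℝ E) (modelWithCornersSelf ℝ E) M M 1)
    (γ : ℝ → M) (hγ : ContinuousOn γ (Set.Icc 0 1))
    (hrect : eVariationOn γ (Set.Icc 0 1) ≠ ⊤)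
    (C : ℝ) (hC : ∀ n : ℕ, eVariationOn (f.toFun^[n] ∘ γ) (Set.Icc 0 1) ≤ ENNReal.ofReal C) :
    ∀ δ : ℝ, 0 < δ → spanRate f.toFun (γ '' Set.Icc 0 1) δ = 0 := by
  intro δ hδ
  set F := f.toFun with hF
  set D : ℝ := max C 0 with hDdef
  have hD0 : (0:ℝ) ≤ D := le_max_right _ _
  have hCD : ∀ i : ℕ, eVariationOn (F^[i] ∘ γ) (Icc 0 1) ≤ ENNReal.ofReal D := fun i =>
    (hC i).trans (ENNReal.ofReal_le_ofReal (le_max_left _ _))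
  set w : ℝ := δ / 2 with hw
  have hw0 : 0 < w := by positivity
  -- the polynomial bound on spanning numbers
  have hbound : ∀ n : ℕ,
      (spanNum F (γ '' Icc 0 1) n δ).toNat ≤ ⌊(n : ℝ) * D / w⌋₊ + 1 := by
    intro n
    obtain ⟨A, hA, hcard⟩ := exists_spanning_finset F γ n δ D hδ hD0 hCD
    have h1 : spanNum F (γ '' Icc 0 1) n δ ≤ (A.card : ℕ∞) :=
      sInf_le ⟨A, hA, rfl⟩
    have h2 : spanNum F (γ '' Icc 0 1) n δ ≤ ((⌊(n : ℝ) * D / w⌋₊ + 1 : ℕ) : ℕ∞) :=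
      h1.trans (by exact_mod_cast hcard)
    exact ENat.toNat_le_of_le_coe h2
  -- the sequence of logarithms tends to zero
  set g : ℕ → ℝ := fun n => Real.log ((spanNum F (γ '' Icc 0 1) n δ).toNat) / n with hg
  have hglb : ∀ n, 0 ≤ g n := fun n =>
    div_nonneg (Real.log_natCast_nonneg _) (Nat.cast_nonneg n)
  set c : ℝ := D / w + 1 with hc
  have hc1 : (1:ℝ) ≤ c := by
    rw [hc]
    have : (0:ℝ) ≤ D / w := by positivity
    linarith
  have hgub : ∀ n : ℕ, 1 ≤ n → g n ≤ (Real.log c + Real.log n) / n := by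
    intro n hn
    have hn0 : (0:ℝ) < n := by exact_mod_cast hn
    have hn1 : (1:ℝ) ≤ n := by exact_mod_cast hn
    have h1 : Real.log ((spanNum F (γ '' Icc 0 1) n δ).toNat)
        ≤ Real.log (⌊(n : ℝ) * D / w⌋₊ + 1 : ℕ) := logNat_mono (hbound n)
    have h2 : ((⌊(n : ℝ) * D / w⌋₊ + 1 : ℕ) : ℝ) ≤ c * n := by
      push_cast
      have hfl : (⌊(n : ℝ) * D / w⌋₊ : ℝ) ≤ (n : ℝ) * D / w :=
        Nat.floor_le (by positivity)
      have : (n : ℝ) * D / w = (D / w) * n := by ring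
      rw [hc]
      have hDw : (0:ℝ) ≤ D / w := by positivity
      nlinarith
    have h3 : Real.log (⌊(n : ℝ) * D / w⌋₊ + 1 : ℕ) ≤ Real.log (c * n) := by
      apply Real.log_le_log (by positivity) h2
    have h4 : Real.log (c * n) = Real.log c + Real.log n :=
      Real.log_mul (by linarith) (by positivity)
    have hle := (h1.trans h3).trans_eq h4
    show Real.log ((spanNum F (γ '' Icc 0 1) n δ).toNat) / n ≤ _
    apply div_le_div_of_nonneg_right hle hn0.le
  have hub_tendsto : Tendsto (fun n : ℕ => (Real.log c + Real.log n) / n) atTop (𝓝 0) := by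
    have e : (fun n : ℕ => (Real.log c + Real.log n) / n)
        = (fun n : ℕ => Real.log c / n + Real.log n / n) := by
      funext n; ring
    rw [e]
    have t1 : Tendsto (fun n : ℕ => Real.log c / n) atTop (𝓝 0) :=
      tendsto_const_div_atTop_nhds_zero_nat _
    have t2 : Tendsto (fun n : ℕ => Real.log n / n) atTop (𝓝 0) :=
      (Real.isLittleO_log_id_atTop.tendsto_div_nhds_zero).comp tendsto_natCast_atTop_atTop
    simpa using t1.add t2
  have hgt : Tendsto g atTop (𝓝 0) := by
    refine tendsto_of_tendsto_of_tendsto_of_le_of_le' tendsto_const_nhds hub_tendsto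
      (Eventually.of_forall hglb) ?_
    filter_upwards [eventually_ge_atTop 1] with n hn
    exact hgub n hn
  have hET : Tendsto (fun n : ℕ => ((g n : ℝ) : EReal)) atTop (𝓝 (0 : EReal)) := by
    have := EReal.tendsto_coe.2 hgt
    simpa using this
  exact hET.limsup_eq
end
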